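/- Let h be analytic on the annulus B = A(r,R) with 0 < r < R < ∞ and |h(z)| > 1 on B. Then for every ρ ∈ (r,R), log m̂(ρ,h) ≥ exp( −(π²/2) max{1/log(R/ρ), 1/log(ρ/r)} ) · log M(ρ,h), where m̂(ρ,h) = min{|h(z)| : |z| = ρ} and M(ρ,h) = max{|h(z)| : |z| = ρ}. -/

import Mathlib

open Real Complex

/-- The round annulus `A(r,R) = {z : r < |z| < R}`. -/
def annulus (r R : ℝ) : Set ℂ := {z : ℂ | r < ‖z‖ ∧ ‖z‖ < R}

/-- The maximum modulus `M(ρ,h) = max {|h z| : |z| = ρ}`. -/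
noncomputable def maxMod (h : ℂ → ℂ) (ρ : ℝ) : ℝ :=
  sSup ((fun z => ‖(h z)‖) '' Metric.sphere (0 : ℂ) ρ)

/-- The minimum modulus `m̂(ρ,h) = min {|h z| : |z| = ρ}`. -/
noncomputable def minMod (h : ℂ → ℂ) (ρ : ℝ) : ℝ :=
  sInf ((fun z => ‖(h z)‖) '' Metric.sphere (0 : ℂ) ρ)


lemma one_sub_tanh_eq (b : ℝ) : 1 - Real.tanh b = Real.exp (-b) / Real.cosh b := by
  rw [Real.tanh_eq_sinh_div_cosh, ← Real.cosh_sub_sinh]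
  field_simp

lemma one_add_tanh_eq (b : ℝ) : 1 + Real.tanh b = Real.exp b / Real.cosh b := by
  rw [Real.tanh_eq_sinh_div_cosh, ← Real.cosh_add_sinh]
  field_simp

lemma tanh_lt_one' (b : ℝ) : Real.tanh b < 1 := by
  have h := one_sub_tanh_eq b
  nlinarith [div_pos (Real.exp_pos (-b)) (Real.cosh_pos b)]

lemma tanh_nonneg' {b : ℝ} (hb : 0 ≤ b) : 0 ≤ Real.tanh b := by
  rw [Real.tanh_eq_sinh_div_cosh]
  exact div_nonneg (Real.sinh_nonneg_iff.2 hb) (Real.cosh_pos b).le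

lemma abs_tanh_eq (a : ℝ) : |Real.tanh a| = Real.tanh |a| := by
  rcases abs_cases a with ⟨h1, h2⟩ | ⟨h1, h2⟩
  · rw [h1, _root_.abs_of_nonneg (tanh_nonneg' h2)]
  · rw [h1, Real.tanh_neg, _root_.abs_of_nonpos]
    have := tanh_nonneg' (neg_nonneg.2 h2.le)
    rw [Real.tanh_neg] at this; linarith

lemma tanh_ratio (b : ℝ) :
    (1 - Real.tanh b) / (1 + Real.tanh b) = Real.exp (-(2 * b)) := by
  rw [one_sub_tanh_eq, one_add_tanh_eq, div_div_div_eq]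
  have h1 : Real.exp (-b) * Real.cosh b / (Real.cosh b * Real.exp b)
      = Real.exp (-b) / Real.exp b := by
    rw [mul_comm (Real.cosh b) (Real.exp b)]
    exact mul_div_mul_right _ _ (Real.cosh_pos b).ne'
  rw [h1, ← Real.exp_sub]
  ring_nf

/-! ### Harnack inequality on the unit disk, via the Schwarz lemma -/

lemma harnack_disk {F : ℂ → ℂ} (hF : DifferentiableOn ℂ F (Metric.ball 0 1))
    (hpos : ∀ w ∈ Metric.ball (0:ℂ) 1, 0 < (F w).re) {z : ℂ} (hz : ‖z‖ < 1) :
    (F 0).re * ((1 - ‖z‖) / (1 + ‖z‖)) ≤ (F z).re := by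
  have h0mem : (0:ℂ) ∈ Metric.ball (0:ℂ) 1 := Metric.mem_ball_self one_pos
  have hzmem : z ∈ Metric.ball (0:ℂ) 1 := by
    simpa [Metric.mem_ball, Complex.dist_eq] using hz
  set p := F 0 with hp
  have hpre : 0 < p.re := hpos 0 h0mem
  have hden : ∀ w ∈ Metric.ball (0:ℂ) 1, F w + (starRingEnd ℂ) p ≠ 0 := by
    intro w hw
    have h1 : 0 < (F w + (starRingEnd ℂ) p).re := by
      simp only [Complex.add_re, Complex.conj_re]
      linarith [hpos w hw]
    intro hcon
    rw [hcon] at h1; simp at h1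
  set Φ : ℂ → ℂ := fun w => (F w - p) / (F w + (starRingEnd ℂ) p) with hΦ
  have hΦd : DifferentiableOn ℂ Φ (Metric.ball 0 1) :=
    (hF.sub (differentiableOn_const p)).div
      (hF.add (differentiableOn_const _)) hden
  have hmaps : Set.MapsTo Φ (Metric.ball 0 1) (Metric.ball 0 1) := by
    intro w hw
    have hnum : Complex.normSq (F w - p) < Complex.normSq (F w + (starRingEnd ℂ) p) := by
      simp only [Complex.normSq_apply, Complex.sub_re, Complex.sub_im, Complex.add_re,
        Complex.add_im, Complex.conj_re, Complex.conj_im]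
      nlinarith [mul_pos (hpos w hw) hpre]
    have habs : ‖(F w - p)‖ < ‖(F w + (starRingEnd ℂ) p)‖ := by
      rw [Complex.norm_def, Complex.norm_def]
      exact Real.sqrt_lt_sqrt (Complex.normSq_nonneg _) hnum
    have hdpos : 0 < ‖(F w + (starRingEnd ℂ) p)‖ :=
      (norm_pos_iff.2 (hden w hw))
    simp only [Metric.mem_ball, Complex.dist_eq, sub_zero, hΦ, norm_div]
    exact (div_lt_one hdpos).2 habs
  have hΦ0 : Φ 0 = 0 := by simp [hΦ, ← hp]
  have hq : ‖(Φ z)‖ ≤ ‖z‖ :=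
    Complex.norm_le_norm_of_mapsTo_ball_self hΦd (hmaps.mono_right Metric.ball_subset_closedBall) hΦ0 hz
  -- recover F z from Φ z
  set q := Φ z with hqdef
  have hq1 : ‖q‖ < 1 := lt_of_le_of_lt hq hz
  have hqne : (1:ℂ) - q ≠ 0 := by
    intro hcon
    have : q = 1 := by linear_combination -hcon
    rw [this] at hq1; simp at hq1
  have hFz : F z = (p + q * (starRingEnd ℂ) p) / (1 - q) := by
    have h1 : q * (F z + (starRingEnd ℂ) p) = F z - p := by
      rw [hqdef, hΦ]
      exact div_mul_cancel₀ _ (hden z hzmem)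
    rw [eq_div_iff hqne]
    linear_combination -h1
  -- now compute the real part
  set a := p.re
  set x := q.re
  set y := q.im
  have hxy : x ^ 2 + y ^ 2 ≤ (‖z‖) ^ 2 := by
    have h1 : (‖q‖) ^ 2 = x ^ 2 + y ^ 2 := by
      rw [Complex.sq_norm, Complex.normSq_apply]; ring
    nlinarith [norm_nonneg q, norm_nonneg z]
  set s := ‖z‖ with hsdef
  have hs0 : 0 ≤ s := norm_nonneg z
  have hre : (F z).re = (a * (1 - x ^ 2 - y ^ 2)) / ((1 - x) ^ 2 + y ^ 2) := by
    rw [hFz, Complex.div_re]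
    have hns : Complex.normSq (1 - q) = (1 - x) ^ 2 + y ^ 2 := by
      rw [Complex.normSq_apply]
      simp [Complex.sub_re, Complex.sub_im]
      ring
    rw [hns]
    simp only [Complex.add_re, Complex.add_im, Complex.mul_re, Complex.mul_im,
      Complex.conj_re, Complex.conj_im, Complex.sub_re, Complex.sub_im,
      Complex.one_re, Complex.one_im]
    field_simp
    ring
  rw [hre]
  have hx1 : x ^ 2 ≤ s ^ 2 := by nlinarith [sq_nonneg y]
  have hxs : -s ≤ x := by nlinarith
  have hxlt : x < 1 :=
    lt_of_le_of_lt ((le_abs_self x).trans ((Complex.abs_re_le_norm q).trans hq)) hz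
  have hdenpos : 0 < (1 - x) ^ 2 + y ^ 2 := by
    have := pow_pos (sub_pos.2 hxlt) 2
    linarith [sq_nonneg y]
  rw [mul_div_assoc', div_le_div_iff₀ (by linarith : (0:ℝ) < 1 + s) hdenpos]
  nlinarith [mul_nonneg hpre.le (sub_nonneg.2 hxy),
    mul_nonneg (mul_nonneg hpre.le (by linarith : (0:ℝ) ≤ 1 - s)) (by linarith : (0:ℝ) ≤ x + s)]

/-! ### Existence of primitives on the unit disk -/

lemma exists_primitive_disk {G : ℂ → ℂ}
    (hG : DifferentiableOn ℂ G (Metric.closedBall 0 1)) :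
    ∃ F : ℂ → ℂ, ∀ z ∈ Metric.ball (0:ℂ) 1, HasDerivAt F (G z) z := by
  have hp : HasFPowerSeriesOnBall G (cauchyPowerSeries G 0 1) 0 1 := by
    have h := DifferentiableOn.hasFPowerSeriesOnBall (R := 1) (by simpa using hG) one_pos
    simpa using h
  set p := cauchyPowerSeries G 0 1 with hpdef
  set a : ℕ → ℂ := fun n => p.coeff n with ha
  refine ⟨fun z => ∑' n, (a n / (n + 1)) * z ^ (n + 1), fun z hz => ?_⟩
  have hzabs : ‖z‖ < 1 := by simpa [Metric.mem_ball, Complex.dist_eq] using hz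
  obtain ⟨S, hS1, hS2⟩ := exists_between hzabs
  have hS0 : 0 ≤ S := (norm_nonneg z).trans hS1.le
  have hrad : (1 : ENNReal) ≤ p.radius := by simpa using hp.r_le
  have hsum : Summable (fun n => ‖p n‖ * S ^ n) := by
    have h1 : (S.toNNReal : ENNReal) < p.radius := by
      refine lt_of_lt_of_le ?_ hrad
      rw [ENNReal.coe_lt_one_iff]
      exact_mod_cast (by simpa [Real.toNNReal_lt_one] using hS2 : S.toNNReal < 1)
    have h2 := p.summable_norm_mul_pow h1
    simpa [Real.coe_toNNReal S hS0] using h2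
  have hder := hasDerivAt_tsum_of_isPreconnected (u := fun n => ‖p n‖ * S ^ n)
    (g := fun n y => (a n / (n + 1)) * y ^ (n + 1))
    (g' := fun n y => a n * y ^ n)
    (t := Metric.ball (0:ℂ) S) (y₀ := 0) (y := z)
    hsum Metric.isOpen_ball ((convex_ball (0:ℂ) S).isPreconnected)
    (fun n y _ => by
      have h := (hasDerivAt_pow (n + 1) y).const_mul (a n / (n + 1))
      refine h.congr_deriv ?_
      have hne : ((n : ℂ) + 1) ≠ 0 := Nat.cast_add_one_ne_zero n
      rw [Nat.add_sub_cancel, Nat.cast_add_one, ← mul_assoc, div_mul_cancel₀ _ hne])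
    (fun n y hy => by
      have hy' : ‖y‖ < S := by simpa [Metric.mem_ball, Complex.dist_eq] using hy
      have : ‖a n * y ^ n‖ = ‖a n‖ * (‖y‖) ^ n := by
        simp [norm_mul, norm_pow]
      rw [this, ← FormalMultilinearSeries.norm_apply_eq_norm_coef]
      exact mul_le_mul_of_nonneg_left
        (pow_le_pow_left₀ (norm_nonneg y) hy'.le n) (norm_nonneg _))
    (Metric.mem_ball_self (lt_of_le_of_lt (norm_nonneg z) hS1))
    (by
      have : (fun n => (a n / (n + 1)) * (0:ℂ) ^ (n + 1)) = fun _ => (0:ℂ) := by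
        funext n; simp
      rw [this]; exact summable_zero)
    (by simpa [Metric.mem_ball, Complex.dist_eq] using hS1)
  have hsum2 : HasSum (fun n => a n * z ^ n) (G z) := by
    have hmem : z ∈ EMetric.ball (0:ℂ) 1 := by
      change edist z 0 < 1
      rw [edist_dist, ENNReal.ofReal_lt_one]
      simpa [Metric.mem_ball, Complex.dist_eq] using hzabs
    have h := hp.hasSum hmem
    simp only [zero_add] at h
    have heq : (fun n => p n fun _ => z) = fun n => a n * z ^ n := by
      funext n
      rw [FormalMultilinearSeries.apply_eq_pow_smul_coeff, smul_eq_mul]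
      ring
    rwa [heq] at h
  rw [← hsum2.tsum_eq]
  exact hder

/-! ### Existence of a holomorphic logarithm on the unit disk -/

lemma exists_log_disk {T : ℝ} (hT : 1 < T) {f : ℂ → ℂ}
    (hf : DifferentiableOn ℂ f (Metric.ball 0 T))
    (hne : ∀ z ∈ Metric.ball (0:ℂ) T, f z ≠ 0) :
    ∃ F : ℂ → ℂ, DifferentiableOn ℂ F (Metric.ball 0 1) ∧
      ∀ z ∈ Metric.ball (0:ℂ) 1, Complex.exp (F z) = f z := by
  have hop : IsOpen (Metric.ball (0:ℂ) T) := Metric.isOpen_ball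
  have hfa : AnalyticOnNhd ℂ f (Metric.ball 0 T) := hf.analyticOnNhd hop
  have hderiv : DifferentiableOn ℂ (deriv f) (Metric.ball 0 T) :=
    hfa.deriv.differentiableOn
  set G : ℂ → ℂ := fun z => deriv f z / f z with hGdef
  have hGd : DifferentiableOn ℂ G (Metric.ball 0 T) := hderiv.div hf hne
  have hGc : DifferentiableOn ℂ G (Metric.closedBall 0 1) :=
    hGd.mono (Metric.closedBall_subset_ball hT)
  obtain ⟨F₀, hF₀⟩ := exists_primitive_disk hGc
  have hball1T : Metric.ball (0:ℂ) 1 ⊆ Metric.ball 0 T := Metric.ball_subset_ball hT.le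
  have key : ∀ z ∈ Metric.ball (0:ℂ) 1,
      HasDerivAt (fun w => f w * Complex.exp (-F₀ w)) 0 z := by
    intro z hz
    have hfz : HasDerivAt f (deriv f z) z :=
      (hf.differentiableAt (hop.mem_nhds (hball1T hz))).hasDerivAt
    have hF : HasDerivAt F₀ (G z) z := hF₀ z hz
    have he : HasDerivAt (fun w => Complex.exp (-F₀ w))
        (Complex.exp (-F₀ z) * (-G z)) z := hF.neg.cexp
    have hmul := hfz.mul he
    refine hmul.congr_deriv ?_
    have hfz0 : f z ≠ 0 := hne z (hball1T hz)
    simp only [hGdef]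
    field_simp
    ring
  have hconst : ∀ z ∈ Metric.ball (0:ℂ) 1,
      f z * Complex.exp (-F₀ z) = f 0 * Complex.exp (-F₀ 0) := by
    intro z hz
    have h0 : (0:ℂ) ∈ Metric.ball (0:ℂ) 1 := Metric.mem_ball_self one_pos
    have hbound := (convex_ball (0:ℂ) 1).norm_image_sub_le_of_norm_hasFDerivWithin_le
      (f := fun w => f w * Complex.exp (-F₀ w))
      (f' := fun _ => (0 : ℂ →L[ℂ] ℂ)) (C := 0)
      (fun w hw => by
        have h1 := (key w hw).hasFDerivAt
        have h2 : (ContinuousLinearMap.toSpanSingleton ℂ (0:ℂ)) = 0 := by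
          ext v; simp
        rw [h2] at h1
        exact h1.hasFDerivWithinAt)
      (fun w _ => by simp) h0 hz
    have : ‖f z * Complex.exp (-F₀ z) - f 0 * Complex.exp (-F₀ 0)‖ ≤ 0 := by
      simpa using hbound
    have := norm_le_zero_iff.mp this
    linear_combination this
  set C := f 0 * Complex.exp (-F₀ 0) with hCdef
  have hC : C ≠ 0 :=
    mul_ne_zero (hne 0 (Metric.mem_ball_self (lt_trans one_pos hT))) (Complex.exp_ne_zero _)
  refine ⟨fun z => F₀ z + Complex.log C, fun z hz =>
    ((hF₀ z hz).differentiableAt.add_const _).differentiableWithinAt, fun z hz => ?_⟩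
  rw [Complex.exp_add, Complex.exp_log hC]
  calc Complex.exp (F₀ z) * C = Complex.exp (F₀ z) * (f z * Complex.exp (-F₀ z)) := by
        rw [hconst z hz]
    _ = f z * (Complex.exp (F₀ z) * Complex.exp (-F₀ z)) := by ring
    _ = f z := by rw [← Complex.exp_add]; simp

/-! ### The complex arctanh map from the disk to a strip -/

noncomputable def atC (ζ : ℂ) : ℂ := (Complex.log (1 + ζ) - Complex.log (1 - ζ)) / 2

lemma re_one_add_pos {ζ : ℂ} (hζ : ‖ζ‖ < 1) : 0 < (1 + ζ).re := by
  have := (abs_le.1 (Complex.abs_re_le_norm ζ)).1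
  simp only [Complex.add_re, Complex.one_re]
  linarith

lemma re_one_sub_pos {ζ : ℂ} (hζ : ‖ζ‖ < 1) : 0 < (1 - ζ).re := by
  have := (abs_le.1 (Complex.abs_re_le_norm ζ)).2
  simp only [Complex.sub_re, Complex.one_re]
  linarith

lemma atC_differentiableAt {ζ : ℂ} (hζ : ‖ζ‖ < 1) : DifferentiableAt ℂ atC ζ := by
  have d1 : DifferentiableAt ℂ (fun w : ℂ => Complex.log (1 + w)) ζ :=
    DifferentiableAt.clog ((differentiableAt_const 1).add differentiableAt_id)
      (Complex.mem_slitPlane_iff.2 (Or.inl (re_one_add_pos hζ)))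
  have d2 : DifferentiableAt ℂ (fun w : ℂ => Complex.log (1 - w)) ζ :=
    DifferentiableAt.clog ((differentiableAt_const 1).sub differentiableAt_id)
      (Complex.mem_slitPlane_iff.2 (Or.inl (re_one_sub_pos hζ)))
  exact (d1.sub d2).div_const 2

lemma arg_eq_arctan_of_re_pos {z : ℂ} (hz : 0 < z.re) :
    z.arg = Real.arctan (z.im / z.re) := by
  have h := Complex.abs_arg_lt_pi_div_two_iff.2 (Or.inl hz)
  rw [← Complex.tan_arg, Real.arctan_tan (by linarith [(abs_lt.1 h).1]) (abs_lt.1 h).2]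

lemma atC_im_bound {ζ : ℂ} (hζ : ‖ζ‖ < 1) : |(atC ζ).im| < π / 4 := by
  set x := ζ.re
  set y := ζ.im
  have hsq : x ^ 2 + y ^ 2 < 1 := by
    have h1 : ‖ζ‖ ^ 2 = x ^ 2 + y ^ 2 := by
      rw [Complex.sq_norm, Complex.normSq_apply]; ring
    nlinarith [norm_nonneg ζ]
  have h1p := re_one_add_pos hζ
  have h2p := re_one_sub_pos hζ
  have hax : (1 + ζ).arg = Real.arctan (y / (1 + x)) := by
    rw [arg_eq_arctan_of_re_pos h1p]
    simp [Complex.add_re, Complex.add_im]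
    rfl
  have hbx : (1 - ζ).arg = Real.arctan (-y / (1 - x)) := by
    rw [arg_eq_arctan_of_re_pos h2p]
    simp [Complex.sub_re, Complex.sub_im]
    rfl
  have him : (atC ζ).im
      = (Real.arctan (y / (1 + x)) + Real.arctan (y / (1 - x))) / 2 := by
    simp only [atC, Complex.div_im, Complex.sub_im, Complex.sub_re, Complex.log_im]
    rw [hax, hbx]
    have : Real.arctan (-y / (1 - x)) = -Real.arctan (y / (1 - x)) := by
      rw [neg_div, Real.arctan_neg]
    rw [this]
    norm_num
    ring
  have h1x : 0 < 1 + x := by simpa [Complex.add_re] using h1p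
  have h2x : 0 < 1 - x := by simpa [Complex.sub_re] using h2p
  have hprod : y / (1 + x) * (y / (1 - x)) < 1 := by
    rw [div_mul_div_comm, div_lt_one (by positivity)]
    nlinarith
  have hup : Real.arctan (y / (1 + x)) + Real.arctan (y / (1 - x)) < π / 2 :=
    Real.arctan_add_arctan_lt_pi_div_two hprod
  have hdown : -(π / 2) < Real.arctan (y / (1 + x)) + Real.arctan (y / (1 - x)) := by
    have hprod' : -y / (1 + x) * (-y / (1 - x)) < 1 := by
      rw [neg_div, neg_div, neg_mul_neg]; exact hprod
    have := Real.arctan_add_arctan_lt_pi_div_two hprod'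
    rw [neg_div, neg_div, Real.arctan_neg, Real.arctan_neg] at this
    linarith
  rw [him, abs_div, (by norm_num : |(2:ℝ)| = 2), div_lt_iff₀ (by norm_num : (0:ℝ) < 2), abs_lt]
  constructor <;> linarith

lemma atC_zero : atC 0 = 0 := by
  simp [atC]

lemma atC_ofReal_neg_tanh (b : ℝ) :
    atC ((-Real.tanh b : ℝ) : ℂ) = ((-b : ℝ) : ℂ) := by
  have pos1 : 0 < 1 - Real.tanh b := by
    rw [one_sub_tanh_eq]; positivity
  have pos2 : 0 < 1 + Real.tanh b := by
    rw [one_add_tanh_eq]; positivity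
  have e1 : (1 : ℂ) + ((-Real.tanh b : ℝ) : ℂ) = ((1 - Real.tanh b : ℝ) : ℂ) := by
    push_cast; ring
  have e2 : (1 : ℂ) - ((-Real.tanh b : ℝ) : ℂ) = ((1 + Real.tanh b : ℝ) : ℂ) := by
    push_cast; ring
  rw [atC, e1, e2, ← Complex.ofReal_log pos1.le, ← Complex.ofReal_log pos2.le]
  have : Real.log (1 - Real.tanh b) - Real.log (1 + Real.tanh b) = -(2 * b) := by
    rw [one_sub_tanh_eq, one_add_tanh_eq,
      Real.log_div (Real.exp_ne_zero _) (Real.cosh_pos b).ne',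
      Real.log_div (Real.exp_ne_zero _) (Real.cosh_pos b).ne',
      Real.log_exp, Real.log_exp]
    ring
  rw [← Complex.ofReal_sub, this]
  push_cast
  ring

lemma limit_aux {s A B : ℝ} (hs0 : 0 ≤ s) (hs1 : s < 1)
    (H : ∀ β : ℝ, s < β → β < 1 → (β - s) / (β + s) * A ≤ B) :
    (1 - s) / (1 + s) * A ≤ B := by
  have hne : (nhdsWithin (1:ℝ) (Set.Ioo s 1)).NeBot := by
    apply mem_closure_iff_nhdsWithin_neBot.mp
    rw [closure_Ioo (ne_of_lt hs1)]
    exact ⟨hs1.le, le_refl 1⟩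
  have hca : ContinuousAt (fun β : ℝ => (β - s) / (β + s) * A) 1 := by
    apply ContinuousAt.mul _ continuousAt_const
    exact ContinuousAt.div ((continuous_id.sub continuous_const).continuousAt)
      ((continuous_id.add continuous_const).continuousAt) (by intro hc; linarith)
  have hcont : Filter.Tendsto (fun β : ℝ => (β - s) / (β + s) * A)
      (nhdsWithin (1:ℝ) (Set.Ioo s 1)) (nhds ((1 - s) / (1 + s) * A)) :=
    (hca.tendsto).mono_left nhdsWithin_le_nhds
  exact le_of_tendsto hcont
    (Filter.eventually_of_mem self_mem_nhdsWithin fun β hβ => H β hβ.1 hβ.2)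

lemma isOpen_annulus (r R : ℝ) : IsOpen (annulus r R) := by
  have : annulus r R = (fun z : ℂ => ‖z‖) ⁻¹' (Set.Ioo r R) := rfl
  rw [this]
  exact (isOpen_Ioo).preimage continuous_norm

lemma key_ineq {r R ρ : ℝ} (hr : 0 < r) (h : ℂ → ℂ)
    (hh : DifferentiableOn ℂ h (annulus r R))
    (hbig : ∀ z ∈ annulus r R, 1 < ‖(h z)‖)
    (hρ₁ : r < ρ) (hρ₂ : ρ < R) {z₁ z₂ : ℂ}
    (h1 : ‖z₁‖ = ρ) (h2 : ‖z₂‖ = ρ) :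
    Real.exp (-(π ^ 2 / (2 * min (Real.log (R / ρ)) (Real.log (ρ / r))))) *
      Real.log (‖(h z₁)‖) ≤ Real.log (‖(h z₂)‖) := by
  set L := min (Real.log (R / ρ)) (Real.log (ρ / r)) with hLdef
  have hρ : 0 < ρ := lt_trans hr hρ₁
  have hL1 : 0 < Real.log (R / ρ) := Real.log_pos ((one_lt_div hρ).2 hρ₂)
  have hL2 : 0 < Real.log (ρ / r) := Real.log_pos ((one_lt_div hr).2 hρ₁)
  have hL : 0 < L := lt_min hL1 hL2
  have hπ : 0 < π := Real.pi_pos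
  have hz₁0 : z₁ ≠ 0 := by
    intro hc; rw [hc] at h1; simp at h1; linarith
  set θ₁ := z₁.arg with hθdef
  set t := (z₂ / z₁).arg with htdef
  have ht : |t| ≤ π := Complex.abs_arg_le_pi _
  set aa := π * t / (4 * L) with haadef
  set s := |Real.tanh aa| with hsdef
  have hs0 : 0 ≤ s := abs_nonneg _
  have hs1 : s < 1 := by rw [hsdef, abs_tanh_eq]; exact tanh_lt_one' _
  have hA0 : 0 ≤ Real.log (‖(h z₁)‖) := by
    apply Real.log_nonneg
    exact (hbig z₁ ⟨h1 ▸ hρ₁, h1 ▸ hρ₂⟩).le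
  -- the map ψ from the disk into (log of) the annulus
  set ψ : ℂ → ℂ := fun w =>
    ((Real.log ρ : ℝ) : ℂ) + (θ₁ : ℂ) * Complex.I
      + ((4 * L / π : ℝ) : ℂ) * (-Complex.I) * atC w with hψdef
  have hψre : ∀ w, (ψ w).re = Real.log ρ + (4 * L / π) * (atC w).im := by
    intro w
    simp [hψdef, Complex.add_re, Complex.mul_re, Complex.mul_im,
      Complex.ofReal_re, Complex.ofReal_im, Complex.I_re, Complex.I_im,
      Complex.neg_re, Complex.neg_im]
    all_goals ring
  have hψmem : ∀ w, ‖w‖ < 1 → Complex.exp (ψ w) ∈ annulus r R := by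
    intro w hw
    have him := atC_im_bound hw
    have hre := hψre w
    have hc : 0 < 4 * L / π := by positivity
    have habs : |(4 * L / π) * (atC w).im| < L := by
      rw [abs_mul, _root_.abs_of_pos hc]
      calc 4 * L / π * |(atC w).im| < 4 * L / π * (π / 4) :=
            mul_lt_mul_of_pos_left him hc
        _ = L := by field_simp
    have hlr : L ≤ Real.log ρ - Real.log r := by
      rw [hLdef]
      exact (min_le_right _ _).trans_eq (Real.log_div hρ.ne' hr.ne')
    have hlR : L ≤ Real.log R - Real.log ρ := by
      rw [hLdef]
      exact (min_le_left _ _).trans_eq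
        (Real.log_div (ne_of_gt (by linarith : (0:ℝ) < R)) hρ.ne')
    have hb := abs_lt.1 habs
    have hlow : Real.log r < (ψ w).re := by rw [hre]; linarith
    have hhigh : (ψ w).re < Real.log R := by rw [hre]; linarith
    constructor
    · rw [Complex.norm_exp]
      calc r = Real.exp (Real.log r) := (Real.exp_log hr).symm
        _ < Real.exp (ψ w).re := Real.exp_lt_exp.2 hlow
    · rw [Complex.norm_exp]
      calc Real.exp (ψ w).re < Real.exp (Real.log R) := Real.exp_lt_exp.2 hhigh
        _ = R := Real.exp_log (lt_trans hρ hρ₂)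
  -- evaluation of exp ∘ ψ at the two special points
  have hexp0 : Complex.exp (ψ 0) = z₁ := by
    rw [hψdef]
    simp only [atC_zero, mul_zero, add_zero]
    rw [Complex.exp_add, ← Complex.ofReal_exp, Real.exp_log hρ]
    rw [← h1, hθdef]
    exact Complex.norm_mul_exp_arg_mul_I z₁
  have hexpt : Complex.exp (ψ ((-Real.tanh aa : ℝ) : ℂ)) = z₂ := by
    rw [hψdef]
    simp only []
    rw [atC_ofReal_neg_tanh]
    have h4 : ((4 * L / π : ℝ) : ℂ) * (-Complex.I) * ((-aa : ℝ) : ℂ)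
        = ((t : ℝ) : ℂ) * Complex.I := by
      push_cast
      rw [haadef]
      have : (π : ℂ) ≠ 0 := Complex.ofReal_ne_zero.2 hπ.ne'
      have hLne : (L : ℂ) ≠ 0 := Complex.ofReal_ne_zero.2 hL.ne'
      field_simp
      push_cast
      field_simp
    rw [h4, Complex.exp_add, Complex.exp_add, ← Complex.ofReal_exp, Real.exp_log hρ]
    have he1 : Complex.exp ((θ₁ : ℂ) * Complex.I) = z₁ / (ρ : ℂ) := by
      rw [eq_div_iff (Complex.ofReal_ne_zero.2 hρ.ne')]
      have := Complex.norm_mul_exp_arg_mul_I z₁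
      rw [h1] at this
      rw [mul_comm]
      exact this
    have he2 : Complex.exp ((t : ℝ) * Complex.I) = z₂ / z₁ := by
      have := Complex.norm_mul_exp_arg_mul_I (z₂ / z₁)
      rw [norm_div, h1, h2, div_self hρ.ne'] at this
      simpa using this
    rw [he1, he2]
    field_simp [hz₁0, Complex.ofReal_ne_zero.2 hρ.ne']
    try ring
  -- pick a scaling factor β and build the log
  have hstep : ∀ β : ℝ, s < β → β < 1 →
      (β - s) / (β + s) * Real.log (‖(h z₁)‖) ≤ Real.log (‖(h z₂)‖) := by
    intro β hβ1 hβ2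
    have hβ0 : 0 < β := lt_of_le_of_lt hs0 hβ1
    have hT : 1 < 1 / β := one_lt_one_div hβ0 hβ2
    set q : ℂ → ℂ := fun ζ => h (Complex.exp (ψ ((β : ℝ) * ζ))) with hqdef
    have hsmall : ∀ ζ : ℂ, ζ ∈ Metric.ball (0:ℂ) (1/β) → ‖((β : ℝ) * ζ)‖ < 1 := by
      intro ζ hζ
      have : ‖ζ‖ < 1 / β := by
        simpa [Metric.mem_ball, Complex.dist_eq] using hζ
      rw [norm_mul, Complex.norm_real, Real.norm_eq_abs, _root_.abs_of_pos hβ0]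
      calc β * ‖ζ‖ < β * (1 / β) :=
            mul_lt_mul_of_pos_left this hβ0
        _ = 1 := by field_simp
    have hmem : ∀ ζ : ℂ, ζ ∈ Metric.ball (0:ℂ) (1/β) →
        Complex.exp (ψ ((β : ℝ) * ζ)) ∈ annulus r R :=
      fun ζ hζ => hψmem _ (hsmall ζ hζ)
    have hqd : DifferentiableOn ℂ q (Metric.ball 0 (1/β)) := by
      intro ζ hζ
      apply DifferentiableAt.differentiableWithinAt
      have datC : DifferentiableAt ℂ atC ((β : ℝ) * ζ) := atC_differentiableAt (hsmall ζ hζ)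
      have dinner : DifferentiableAt ℂ (fun ζ : ℂ => ((β : ℝ) : ℂ) * ζ) ζ :=
        differentiableAt_id.const_mul _
      have dψ : DifferentiableAt ℂ (fun ζ : ℂ => ψ ((β : ℝ) * ζ)) ζ := by
        apply DifferentiableAt.add
        · exact differentiableAt_const _
        · exact ((datC.comp ζ dinner).const_mul _)
      have dh : DifferentiableAt ℂ h (Complex.exp (ψ ((β : ℝ) * ζ))) :=
        hh.differentiableAt ((isOpen_annulus r R).mem_nhds (hmem ζ hζ))
      exact dh.comp ζ dψ.cexp
    have hqne : ∀ ζ ∈ Metric.ball (0:ℂ) (1/β), q ζ ≠ 0 := by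
      intro ζ hζ hc
      have h1' := hbig _ (hmem ζ hζ)
      rw [show h (Complex.exp (ψ ((β:ℝ) * ζ))) = q ζ from rfl, hc] at h1'
      simp at h1'
      try linarith
    obtain ⟨F, hFd, hFeq⟩ := exists_log_disk hT hqd hqne
    have hball : Metric.ball (0:ℂ) 1 ⊆ Metric.ball (0:ℂ) (1/β) :=
      Metric.ball_subset_ball hT.le
    have hFre : ∀ ζ ∈ Metric.ball (0:ℂ) 1, (F ζ).re = Real.log (‖(q ζ)‖) := by
      intro ζ hζ
      rw [← hFeq ζ hζ, Complex.norm_exp, Real.log_exp]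
    have hFpos : ∀ ζ ∈ Metric.ball (0:ℂ) 1, 0 < (F ζ).re := by
      intro ζ hζ
      rw [hFre ζ hζ]
      apply Real.log_pos
      exact hbig _ (hmem ζ (hball hζ))
    set ζ' : ℂ := ((-Real.tanh aa / β : ℝ) : ℂ) with hζ'def
    have habsζ' : ‖ζ'‖ = s / β := by
      rw [hζ'def, Complex.norm_real, Real.norm_eq_abs, abs_div, _root_.abs_of_pos hβ0, abs_neg, hsdef]
    have hζ'lt : ‖ζ'‖ < 1 := by
      rw [habsζ']
      exact (div_lt_one hβ0).2 hβ1
    have hβζ' : ((β : ℝ) : ℂ) * ζ' = ((-Real.tanh aa : ℝ) : ℂ) := by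
      rw [hζ'def, ← Complex.ofReal_mul]
      congr 1
      field_simp
      try ring
    have har := harnack_disk hFd hFpos hζ'lt
    have hq0 : q 0 = h z₁ := by
      show h (Complex.exp (ψ ((β:ℝ) * 0))) = h z₁
      rw [mul_zero, hexp0]
    have hqζ' : q ζ' = h z₂ := by
      show h (Complex.exp (ψ ((β:ℝ) * ζ'))) = h z₂
      rw [hβζ', hexpt]
    have hF0 : (F 0).re = Real.log (‖(h z₁)‖) := by
      rw [hFre 0 (Metric.mem_ball_self one_pos), hq0]
    have hFζ' : (F ζ').re = Real.log (‖(h z₂)‖) := by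
      rw [hFre ζ' (by simpa [Metric.mem_ball, Complex.dist_eq] using hζ'lt), hqζ']
    rw [hF0, hFζ', habsζ'] at har
    have hfrac : (1 - s / β) / (1 + s / β) = (β - s) / (β + s) := by
      have hsβ : 0 ≤ s / β := div_nonneg hs0 hβ0.le
      rw [div_eq_div_iff (by linarith : (0:ℝ) < 1 + s / β).ne' (by linarith : (0:ℝ) < β + s).ne']
      field_simp
      try ring
    rw [hfrac] at har
    rw [mul_comm]
    exact har
  have hfinal := limit_aux hs0 hs1 hstep
  have hratio : (1 - s) / (1 + s) = Real.exp (-(2 * |aa|)) := by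
    rw [hsdef, abs_tanh_eq, tanh_ratio]
  have haabound : 2 * |aa| ≤ π ^ 2 / (2 * L) := by
    have h1 : |aa| = π * |t| / (4 * L) := by
      rw [haadef, abs_div, abs_mul, _root_.abs_of_pos hπ,
        _root_.abs_of_pos (by positivity : (0:ℝ) < 4 * L)]
    have h2 : 2 * (π * |t| / (4 * L)) = π * |t| / (2 * L) := by
      field_simp
      ring
    rw [h1, h2, div_le_div_iff₀ (by positivity) (by positivity)]
    nlinarith [mul_le_mul_of_nonneg_left ht hπ.le, hL]
  calc Real.exp (-(π ^ 2 / (2 * L))) * Real.log (‖(h z₁)‖)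
      ≤ Real.exp (-(2 * |aa|)) * Real.log (‖(h z₁)‖) := by
        apply mul_le_mul_of_nonneg_right _ hA0
        exact Real.exp_le_exp.2 (by linarith)
    _ = (1 - s) / (1 + s) * Real.log (‖(h z₁)‖) := by rw [hratio]
    _ ≤ Real.log (‖(h z₂)‖) := hfinal

/-- **Minimum modulus lemma (Zheng).** If `h` is analytic on the annulus `B = A(r,R)` with
`0 < r < R < ∞` and `|h| > 1` on `B`, then for every `ρ ∈ (r,R)`,
`log m̂(ρ,h) ≥ exp (−(π²/2) max (1/log(R/ρ)) (1/log(ρ/r))) · log M(ρ,h)`. -/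
theorem log_minMod_ge (r R : ℝ) (hr : 0 < r) (hrR : r < R)
    (h : ℂ → ℂ) (hh : AnalyticOn ℂ h (annulus r R))
    (hbig : ∀ z ∈ annulus r R, 1 < ‖(h z)‖)
    (ρ : ℝ) (hρ₁ : r < ρ) (hρ₂ : ρ < R) :
    Real.log (minMod h ρ) ≥
      Real.exp (-(π ^ 2 / 2) *
          max (1 / Real.log (R / ρ)) (1 / Real.log (ρ / r))) *
        Real.log (maxMod h ρ) := by
  have hρ : 0 < ρ := lt_trans hr hρ₁
  have hsub : Metric.sphere (0:ℂ) ρ ⊆ annulus r R := by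
    intro z hz
    have hza : ‖z‖ = ρ := by
      simpa [Complex.dist_eq] using (Metric.mem_sphere.mp hz)
    exact ⟨hza ▸ hρ₁, hza ▸ hρ₂⟩
  have hcont : ContinuousOn (fun z => ‖(h z)‖) (Metric.sphere 0 ρ) :=
    continuous_norm.comp_continuousOn ((hh.differentiableOn.continuousOn).mono hsub)
  have hne : (Metric.sphere (0:ℂ) ρ).Nonempty := by
    refine ⟨(ρ : ℂ), ?_⟩
    simp [mem_sphere_zero_iff_norm, Complex.norm_real, _root_.abs_of_pos hρ]
  obtain ⟨z₁, hz₁m, hmax⟩ := (isCompact_sphere (0:ℂ) ρ).exists_isMaxOn hne hcont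
  obtain ⟨z₂, hz₂m, hmin⟩ := (isCompact_sphere (0:ℂ) ρ).exists_isMinOn hne hcont
  have habs1 : ‖z₁‖ = ρ := by
    simpa [Complex.dist_eq] using (Metric.mem_sphere.mp hz₁m)
  have habs2 : ‖z₂‖ = ρ := by
    simpa [Complex.dist_eq] using (Metric.mem_sphere.mp hz₂m)
  have hmaxeq : maxMod h ρ = ‖(h z₁)‖ := by
    apply IsGreatest.csSup_eq
    exact ⟨⟨z₁, hz₁m, rfl⟩, by rintro _ ⟨w, hw, rfl⟩; exact hmax hw⟩
  have hmineq : minMod h ρ = ‖(h z₂)‖ := by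
    apply IsLeast.csInf_eq
    exact ⟨⟨z₂, hz₂m, rfl⟩, by rintro _ ⟨w, hw, rfl⟩; exact hmin hw⟩
  have hL1 : 0 < Real.log (R / ρ) := Real.log_pos ((one_lt_div hρ).2 hρ₂)
  have hL2 : 0 < Real.log (ρ / r) := Real.log_pos ((one_lt_div hr).2 hρ₁)
  have hconst : -(π ^ 2 / 2) * max (1 / Real.log (R / ρ)) (1 / Real.log (ρ / r))
      = -(π ^ 2 / (2 * min (Real.log (R / ρ)) (Real.log (ρ / r)))) := by
    rcases le_total (Real.log (R / ρ)) (Real.log (ρ / r)) with hc | hc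
    · rw [min_eq_left hc, max_eq_left (one_div_le_one_div_of_le hL1 hc)]
      field_simp
    · rw [min_eq_right hc, max_eq_right (one_div_le_one_div_of_le hL2 hc)]
      field_simp
  rw [ge_iff_le, hmaxeq, hmineq, hconst]
  exact key_ineq hr h hh.differentiableOn hbig hρ₁ hρ₂ habs1 habs2
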